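/- For all m ≥ 1, all 1 ≤ r ≤ m−1, and all n ≥ 1, the higher order Bell numbers satisfy B_n^(m) = Σ_{i=1}^n B_i^(m−r) · S^(r)(n,i). -/

import Mathlib

/-- `m`-th order ("hyper") partitions of a finite set `s`:
a chain `(P₁, …, P_m)` where `P₁` is a partition of `s` and each `P_{j+1}`
is a partition of the set of blocks of `P_j`. For `m = 0` it is `s` itself
(a single trivial object). -/
def HyperPartition : (m : ℕ) → {α : Type} → [DecidableEq α] → Finset α → Type
  | 0, _, _, _ => PUnit
  | m + 1, _, _, s => (P : Finpartition s) × HyperPartition m P.parts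

/-- The number of blocks of the outermost partition of a hyper partition
(for `m = 0`, by convention, the cardinality of the underlying set). -/
def HyperPartition.outerBlocks :
    (m : ℕ) → {α : Type} → [DecidableEq α] → {s : Finset α} →
      HyperPartition m s → ℕ
  | 0, _, _, s, _ => s.card
  | 1, _, _, _, p => p.1.parts.card
  | m + 2, _, _, _, p => HyperPartition.outerBlocks (m + 1) p.2

/-- `|℘ₙ^(m)|`: the number of `m`-th order partitions of an `n`-element set. -/
noncomputable def hyperBell (m n : ℕ) : ℕ :=
  Nat.card (HyperPartition m (Finset.univ : Finset (Fin n)))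

/-- The `m`-th order Stirling number `S^(m)(n,k)`: the number of `m`-th order
partitions of an `n`-element set whose outermost partition has exactly `k` blocks. -/
noncomputable def hyperStirling (m n k : ℕ) : ℕ :=
  Nat.card {p : HyperPartition m (Finset.univ : Finset (Fin n)) //
    HyperPartition.outerBlocks m p = k}

/-- The ordinary Stirling number of the second kind `S(n,k)`: the number of
set partitions of an `n`-element set into exactly `k` blocks. -/
noncomputable def stirling (n k : ℕ) : ℕ :=
  Nat.card {P : Finpartition (Finset.univ : Finset (Fin n)) // P.parts.card = k}

/-- Composition `f(g(x))` of formal power series (intended for `g` with zero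
constant term, in which case `coeff n (g ^ i) = 0` for `i > n`). -/
noncomputable def psComp (f g : PowerSeries ℚ) : PowerSeries ℚ :=
  PowerSeries.mk fun n =>
    PowerSeries.coeff (R := ℚ) n
      (∑ i ∈ Finset.range (n + 1), PowerSeries.C (R := ℚ) (PowerSeries.coeff (R := ℚ) i f) * g ^ i)

/-- The iterated exponential series: `E₀ = exp x`, `E_{m+1} = exp (E_m - 1)`. -/
noncomputable def E : ℕ → PowerSeries ℚ
  | 0 => PowerSeries.exp ℚ
  | m + 1 => psComp (PowerSeries.exp ℚ) (E m - 1)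

/-- The `m`-th order Bell number `Bₙ^(m) = n! · [xⁿ] E_m(x)`. -/
noncomputable def bell (m n : ℕ) : ℚ :=
  (n.factorial : ℚ) * PowerSeries.coeff (R := ℚ) n (E m)

open PowerSeries Finset

lemma coeff_pow_eq_zero' {g : PowerSeries ℚ} (hg : constantCoeff (R := ℚ) g = 0)
    {n i : ℕ} (h : n < i) : coeff (R := ℚ) n (g ^ i) = 0 := by
  rw [PowerSeries.coeff_pow]
  refine Finset.sum_eq_zero fun l hl => ?_
  rw [Finset.mem_finsuppAntidiag] at hl
  have : ∃ j ∈ range i, l j = 0 := by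
    by_contra hc
    push_neg at hc
    have h1 : ∀ j ∈ range i, 1 ≤ l j := fun j hj => Nat.one_le_iff_ne_zero.2 (hc j hj)
    have h2 := Finset.sum_le_sum h1
    have h3 : (range i).sum l = n := hl.1
    simp only [Finset.sum_const, card_range, smul_eq_mul, mul_one, h3] at h2
    omega
  obtain ⟨j, hj, hlj⟩ := this
  refine Finset.prod_eq_zero hj ?_
  rw [hlj, coeff_zero_eq_constantCoeff, hg]

lemma coeff_psComp (f g : PowerSeries ℚ) (n : ℕ) :
    coeff (R := ℚ) n (psComp f g) =
      ∑ i ∈ range (n + 1), coeff (R := ℚ) i f * coeff (R := ℚ) n (g ^ i) := by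
  rw [psComp, coeff_mk, map_sum]
  exact Finset.sum_congr rfl fun i _ => by rw [coeff_C_mul]

lemma natDegree_trunc_lt' (f : PowerSeries ℚ) (N : ℕ) (hN : 0 < N) :
    (trunc N f).natDegree < N := by
  have := degree_trunc_lt f N
  rcases eq_or_ne (trunc N f) 0 with h | h
  · simpa [h]
  · exact Polynomial.natDegree_lt_iff_degree_lt h |>.2 this

lemma coeff_psComp_eval {g : PowerSeries ℚ} (hg : constantCoeff (R := ℚ) g = 0)
    (f : PowerSeries ℚ) {n N : ℕ} (hN : n < N) :
    coeff (R := ℚ) n (psComp f g) = coeff (R := ℚ) n (Polynomial.eval₂ (C (R := ℚ)) g (trunc N f)) := by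
  rw [Polynomial.eval₂_eq_sum_range' (C (R := ℚ)) (natDegree_trunc_lt' f N (by omega)) g]
  rw [map_sum, coeff_psComp]
  rw [Finset.sum_subset (Finset.range_subset_range.2 hN)]
  · refine Finset.sum_congr rfl fun i hi => ?_
    rw [coeff_C_mul, coeff_trunc, if_pos (mem_range.1 hi)]
  · intro i _ hi
    have hni : n < i := by simpa using hi
    rw [coeff_pow_eq_zero' hg hni, mul_zero]

lemma coeff_eval_congr {g : PowerSeries ℚ} (hg : constantCoeff (R := ℚ) g = 0)
    {P Q : Polynomial ℚ} {n : ℕ} (h : ∀ i ≤ n, P.coeff i = Q.coeff i) :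
    coeff (R := ℚ) n (Polynomial.eval₂ (C (R := ℚ)) g P) = coeff (R := ℚ) n (Polynomial.eval₂ (C (R := ℚ)) g Q) := by
  set N := max P.natDegree Q.natDegree + 1 with hN
  rw [Polynomial.eval₂_eq_sum_range' (C (R := ℚ)) (p := P) (n := N) (by omega) g,
    Polynomial.eval₂_eq_sum_range' (C (R := ℚ)) (p := Q) (n := N) (by omega) g,
    map_sum, map_sum]
  refine Finset.sum_congr rfl fun i _ => ?_
  rcases le_or_gt i n with hi | hi
  · rw [coeff_C_mul, coeff_C_mul, h i hi]
  · rw [coeff_C_mul, coeff_C_mul, coeff_pow_eq_zero' hg hi, mul_zero, mul_zero]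

lemma psComp_mul {g : PowerSeries ℚ} (hg : constantCoeff (R := ℚ) g = 0) (a b : PowerSeries ℚ) :
    psComp (a * b) g = psComp a g * psComp b g := by
  ext n
  rw [coeff_psComp_eval hg (a * b) (Nat.lt_succ_self n)]
  rw [coeff_eval_congr hg (Q := trunc (n+1) a * trunc (n+1) b) (fun i hi => by
    rw [coeff_trunc, if_pos (by omega), PowerSeries.coeff_mul, Polynomial.coeff_mul]
    refine Finset.sum_congr rfl fun pq hpq => ?_
    have h1 : pq.1 < n + 1 := by
      have := Finset.HasAntidiagonal.antidiagonal.fst_le hpq; omega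
    have h2 : pq.2 < n + 1 := by
      have := Finset.HasAntidiagonal.antidiagonal.snd_le hpq; omega
    rw [coeff_trunc, coeff_trunc, if_pos h1, if_pos h2])]
  rw [Polynomial.eval₂_mul, PowerSeries.coeff_mul, PowerSeries.coeff_mul]
  refine Finset.sum_congr rfl fun pq hpq => ?_
  have h1 : pq.1 < n + 1 := by have := Finset.HasAntidiagonal.antidiagonal.fst_le hpq; omega
  have h2 : pq.2 < n + 1 := by have := Finset.HasAntidiagonal.antidiagonal.snd_le hpq; omega
  rw [coeff_psComp_eval hg a h1, coeff_psComp_eval hg b h2]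

lemma psComp_one (g : PowerSeries ℚ) : psComp 1 g = 1 := by
  ext n
  rw [coeff_psComp]
  rw [Finset.sum_eq_single 0]
  · simp
  · intro i _ hi
    rw [PowerSeries.coeff_one, if_neg hi, zero_mul]
  · intro h
    simp at h

lemma psComp_pow {g : PowerSeries ℚ} (hg : constantCoeff (R := ℚ) g = 0) (a : PowerSeries ℚ) (j : ℕ) :
    psComp (a ^ j) g = psComp a g ^ j := by
  induction j with
  | zero => simpa using psComp_one g
  | succ j ih => rw [pow_succ, pow_succ, psComp_mul hg, ih]

lemma psComp_sub (f₁ f₂ g : PowerSeries ℚ) :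
    psComp (f₁ - f₂) g = psComp f₁ g - psComp f₂ g := by
  ext n
  simp only [coeff_psComp, map_sub, sub_mul, Finset.sum_sub_distrib]

lemma constantCoeff_psComp (f g : PowerSeries ℚ) :
    constantCoeff (R := ℚ) (psComp f g) = constantCoeff (R := ℚ) f := by
  have := coeff_psComp f g 0
  simp only [coeff_zero_eq_constantCoeff] at this ⊢
  simpa using this

lemma psComp_assoc {a g : PowerSeries ℚ} (ha : constantCoeff (R := ℚ) a = 0)
    (hg : constantCoeff (R := ℚ) g = 0) (f : PowerSeries ℚ) :
    psComp (psComp f a) g = psComp f (psComp a g) := by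
  ext n
  rw [coeff_psComp, coeff_psComp]
  have key : ∀ i ∈ range (n + 1),
      coeff (R := ℚ) i (psComp f a) * coeff (R := ℚ) n (g ^ i)
      = ∑ j ∈ range (n + 1), coeff (R := ℚ) j f * (coeff (R := ℚ) i (a ^ j) * coeff (R := ℚ) n (g ^ i)) := by
    intro i hi
    rw [coeff_psComp, Finset.sum_mul]
    have hsub : range (i + 1) ⊆ range (n + 1) :=
      Finset.range_subset_range.2 (by have := mem_range.1 hi; omega)
    rw [Finset.sum_subset hsub]
    · exact Finset.sum_congr rfl fun j _ => by ring
    · intro j _ hj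
      have hij : i < j := by simp only [mem_range] at hj; omega
      rw [coeff_pow_eq_zero' ha hij, mul_zero, zero_mul]
  rw [Finset.sum_congr rfl key, Finset.sum_comm]
  refine Finset.sum_congr rfl fun j _ => ?_
  rw [← Finset.mul_sum]
  congr 1
  rw [← coeff_psComp, psComp_pow hg]

lemma constantCoeff_E (m : ℕ) : constantCoeff (R := ℚ) (E m) = 1 := by
  induction m with
  | zero => simp [E, constantCoeff_exp]
  | succ m ih =>
    rw [E, constantCoeff_psComp]
    exact constantCoeff_exp

lemma E_succ_comp (m : ℕ) : E (m + 1) = psComp (E m) (exp ℚ - 1) := by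
  induction m with
  | zero => rfl
  | succ m ih =>
    have hE : constantCoeff (R := ℚ) (E m - 1) = 0 := by
      simp [constantCoeff_E]
    have hexp : constantCoeff (R := ℚ) (exp ℚ - 1 : PowerSeries ℚ) = 0 := by
      simp [constantCoeff_exp]
    calc E (m + 2) = psComp (exp ℚ) (E (m+1) - 1) := rfl
      _ = psComp (exp ℚ) (psComp (E m) (exp ℚ - 1) - psComp 1 (exp ℚ - 1)) := by
          rw [← ih, psComp_one]
      _ = psComp (exp ℚ) (psComp (E m - 1) (exp ℚ - 1)) := by rw [psComp_sub]
      _ = psComp (psComp (exp ℚ) (E m - 1)) (exp ℚ - 1) := (psComp_assoc hE hexp _).symm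
      _ = psComp (E (m+1)) (exp ℚ - 1) := rfl

noncomputable def Surj (n k : ℕ) : ℕ := Nat.card {f : Fin n → Fin k // Function.Surjective f}

lemma surj_zero (n : ℕ) : Surj n 0 = if n = 0 then 1 else 0 := by
  rcases Nat.eq_zero_or_pos n with rfl | hn
  · rw [if_pos rfl]
    rw [Surj, Nat.card_eq_one_iff_unique]
    constructor
    · constructor
      intro a b
      ext x
      exact absurd x.2 (by exact (Fin.elim0 x))
    · exact ⟨⟨Fin.elim0, fun y => Fin.elim0 y⟩⟩
  · rw [if_neg (by omega), Surj]
    have : IsEmpty {f : Fin n → Fin 0 // Function.Surjective f} := by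
      constructor
      rintro ⟨f, -⟩
      exact Fin.elim0 (f ⟨0, hn⟩)
    exact Nat.card_of_isEmpty

lemma card_surj_arrow (α : Type) [Fintype α] [DecidableEq α] (k : ℕ) :
    Nat.card {g : α → Fin k // Function.Surjective g} = Surj (Fintype.card α) k := by
  rw [Surj]
  apply Nat.card_congr
  apply Equiv.subtypeEquiv (Equiv.arrowCongr (Fintype.equivFin α) (Equiv.refl _))
  intro g
  constructor
  · intro h
    intro y
    obtain ⟨x, hx⟩ := h y
    exact ⟨Fintype.equivFin α x, by simpa [Equiv.arrowCongr] using hx⟩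
  · intro h
    intro y
    obtain ⟨x, hx⟩ := h y
    simp only [Equiv.arrowCongr_apply, Equiv.coe_refl, Function.comp_id,
      Function.id_comp, Function.comp_apply] at hx
    exact ⟨(Fintype.equivFin α).symm x, hx⟩

/-- The fiber of surjections with prescribed "non-last" set. -/
def surjFiberEquiv (n k : ℕ) (s : Finset (Fin n)) (hs : s ≠ univ) :
    {f : {f : Fin n → Fin (k + 1) // Function.Surjective f} //
        univ.filter (fun x => f.1 x ≠ Fin.last k) = s} ≃
      {g : {x // x ∈ s} → Fin k // Function.Surjective g} where
  toFun f := ⟨fun x => (f.1.1 x.1).castPred (by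
      have hx : x.1 ∈ univ.filter (fun y => f.1.1 y ≠ Fin.last k) := by
        rw [f.2]; exact x.2
      simpa using hx), by
    intro j
    obtain ⟨x, hx⟩ := f.1.2 j.castSucc
    have hxs : x ∈ s := by
      rw [← f.2]
      simp only [mem_filter, mem_univ, true_and, hx]
      exact (Fin.castSucc_lt_last j).ne
    exact ⟨⟨x, hxs⟩, by simp [hx]⟩⟩
  invFun g := ⟨⟨fun x => if h : x ∈ s then (g.1 ⟨x, h⟩).castSucc else Fin.last k, by
      intro y
      rcases Fin.eq_castSucc_or_eq_last y with ⟨j, rfl⟩ | rfl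
      · obtain ⟨x, hx⟩ := g.2 j
        refine ⟨x.1, ?_⟩
        show (if h : x.1 ∈ s then (g.1 ⟨x.1, h⟩).castSucc else Fin.last k) = j.castSucc
        rw [dif_pos x.2]
        simp [hx]
      · have : ∃ x : Fin n, x ∉ s := by
          by_contra hc
          push_neg at hc
          exact hs (Finset.eq_univ_iff_forall.2 hc)
        obtain ⟨x, hx⟩ := this
        refine ⟨x, ?_⟩
        show (if h : x ∈ s then (g.1 ⟨x, h⟩).castSucc else Fin.last k) = Fin.last k
        rw [dif_neg hx]⟩, by
    ext x
    simp only [mem_filter, mem_univ, true_and]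
    constructor
    · intro hx
      by_contra hc
      rw [dif_neg hc] at hx
      exact hx rfl
    · intro hx
      rw [dif_pos hx]
      exact (Fin.castSucc_lt_last _).ne⟩
  left_inv f := by
    apply Subtype.ext
    apply Subtype.ext
    funext x
    by_cases hx : x ∈ s
    · simp only [dif_pos hx, Fin.castSucc_castPred]
    · simp only [dif_neg hx]
      have h2 : x ∉ univ.filter (fun y => f.1.1 y ≠ Fin.last k) := by
        rw [f.2]; exact hx
      simp only [mem_filter, mem_univ, true_and, not_not] at h2
      exact h2.symm
  right_inv g := by
    apply Subtype.ext
    funext x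
    simp only [dif_pos x.2]
    apply Fin.castPred_castSucc

lemma surj_succ (n k : ℕ) : Surj n (k + 1) = ∑ p ∈ range n, n.choose p * Surj p k := by
  classical
  set T := {f : Fin n → Fin (k + 1) // Function.Surjective f} with hT
  set φ : T → Finset (Fin n) := fun f => univ.filter (fun x => f.1 x ≠ Fin.last k) with hφ
  set B : Finset (Finset (Fin n)) := (univ : Finset (Finset (Fin n))).filter (· ≠ univ) with hB
  have hmaps : ∀ f : T, f ∈ (univ : Finset T) → φ f ∈ B := by
    intro f _
    simp only [hB, mem_filter, mem_univ, true_and]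
    intro hc
    obtain ⟨x, hx⟩ := f.2 (Fin.last k)
    have : x ∈ φ f := by rw [hc]; exact mem_univ x
    simp only [hφ, mem_filter, mem_univ, true_and] at this
    exact this hx
  have h0 : Surj n (k + 1) = ∑ s ∈ B, (univ.filter (fun f : T => φ f = s)).card := by
    rw [Surj, Nat.card_eq_fintype_card]
    exact Finset.card_eq_sum_card_fiberwise hmaps
  have h1 : ∀ s ∈ B, (univ.filter (fun f : T => φ f = s)).card = Surj s.card k := by
    intro s hs
    have hsne : s ≠ univ := by simpa [hB] using hs
    rw [← Fintype.card_subtype, ← Nat.card_eq_fintype_card,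
      Nat.card_congr (surjFiberEquiv n k s hsne), card_surj_arrow, Fintype.card_coe]
  rw [h0, Finset.sum_congr rfl h1]
  rw [← Finset.sum_fiberwise_of_maps_to (g := Finset.card) (t := range n) (by
    intro s hs
    have hsne : s ≠ univ := by simpa [hB] using hs
    have : s.card < n := by
      have h2 := Finset.card_lt_card (Finset.ssubset_univ_iff.2 hsne)
      simpa using h2
    simpa using this)]
  refine Finset.sum_congr rfl fun p hp => ?_
  have hfil : B.filter (fun s => s.card = p) = Finset.powersetCard p univ := by
    ext s
    simp only [hB, mem_filter, mem_univ, true_and, Finset.mem_powersetCard, Finset.subset_univ]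
    constructor
    · rintro ⟨-, h⟩; exact h
    · intro h
      refine ⟨fun hc => ?_, h⟩
      subst hc
      rw [Finset.card_univ, Fintype.card_fin] at h
      have := mem_range.1 hp
      omega
  rw [hfil]
  rw [Finset.sum_congr rfl (fun s hs => by rw [(Finset.mem_powersetCard.1 hs).2])]
  rw [Finset.sum_const, Finset.card_powersetCard, Finset.card_univ, Fintype.card_fin,
    smul_eq_mul]

open PowerSeries in
lemma coeff_exp_sub_one (q : ℕ) :
    coeff (R := ℚ) q (exp ℚ - 1) = if q = 0 then 0 else (1 : ℚ) / q.factorial := by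
  rw [map_sub, coeff_exp, PowerSeries.coeff_one]
  rcases eq_or_ne q 0 with rfl | hq
  · simp
  · rw [if_neg hq, if_neg hq, sub_zero]
    simp [algebraMap]

open PowerSeries in
lemma nfact_coeff_pow (k : ℕ) : ∀ n : ℕ,
    (n.factorial : ℚ) * coeff (R := ℚ) n ((exp ℚ - 1) ^ k) = Surj n k := by
  induction k with
  | zero =>
    intro n
    rw [pow_zero, PowerSeries.coeff_one, surj_zero]
    rcases eq_or_ne n 0 with rfl | hn
    · simp
    · simp [hn]
  | succ k ih =>
    intro n
    rw [pow_succ, PowerSeries.coeff_mul, Finset.Nat.sum_antidiagonal_eq_sum_range_succ_mk,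
      Finset.sum_range_succ]
    have hlast : (coeff (R := ℚ) (n, n - n).2) (exp ℚ - 1) = 0 := by
      show (coeff (R := ℚ) (n - n)) (exp ℚ - 1) = 0
      rw [coeff_exp_sub_one]; simp
    rw [hlast, mul_zero, add_zero, Finset.mul_sum, surj_succ, Nat.cast_sum]
    refine Finset.sum_congr rfl fun p hp => ?_
    dsimp only
    have hpn : p < n := mem_range.1 hp
    have hcoeff : coeff (R := ℚ) p ((exp ℚ - 1) ^ k) = (Surj p k : ℚ) / p.factorial := by
      rw [← ih p]
      field_simp
    rw [hcoeff, coeff_exp_sub_one, if_neg (by omega), Nat.cast_mul,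
      Nat.cast_choose ℚ (le_of_lt hpn)]
    have h1 : (p.factorial : ℚ) ≠ 0 := Nat.cast_ne_zero.2 (Nat.factorial_ne_zero p)
    have h2 : ((n - p).factorial : ℚ) ≠ 0 := Nat.cast_ne_zero.2 (Nat.factorial_ne_zero _)
    field_simp

section FiberPartition

variable {n k : ℕ}

/-- The partition of `Fin n` into fibers of a surjective map. -/
def fiberPartition (f : Fin n → Fin k) (hf : Function.Surjective f) :
    Finpartition (univ : Finset (Fin n)) where
  parts := univ.image (fun j => univ.filter (fun x => f x = j))
  supIndep := by
    rw [Finset.supIndep_iff_pairwiseDisjoint]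
    intro A hA B hB hAB
    simp only [coe_image, Set.mem_image, mem_coe, mem_univ, true_and] at hA hB
    obtain ⟨j₁, -, rfl⟩ := hA
    obtain ⟨j₂, -, rfl⟩ := hB
    have hj : j₁ ≠ j₂ := fun h => hAB (by rw [h])
    rw [Function.onFun, id_eq, id_eq, Finset.disjoint_left]
    intro x h1 h2
    simp only [id_eq, mem_filter, mem_univ, true_and] at h1 h2
    exact hj (by rw [← h1, ← h2])
  sup_parts := by
    apply Finset.Subset.antisymm
    · intro x hx
      rw [Finset.mem_sup] at hx
      obtain ⟨-, -, h⟩ := hx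
      exact mem_univ x
    · intro x _
      rw [Finset.mem_sup]
      exact ⟨univ.filter (fun y => f y = f x), mem_image_of_mem _ (mem_univ (f x)),
        by simp⟩
  bot_notMem := by
    simp only [bot_eq_empty, mem_image, mem_univ, true_and, not_exists]
    intro j h
    obtain ⟨x, hx⟩ := hf j
    have : x ∈ univ.filter (fun y => f y = j) := by simp [hx]
    rw [h] at this
    exact absurd this (Finset.notMem_empty x)

lemma fiberPartition_parts (f : Fin n → Fin k) (hf : Function.Surjective f) :
    (fiberPartition f hf).parts = univ.image (fun j => univ.filter (fun x => f x = j)) := rfl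

lemma fiber_injective (f : Fin n → Fin k) (hf : Function.Surjective f) :
    Function.Injective (fun j => univ.filter (fun x : Fin n => f x = j)) := by
  intro j₁ j₂ h
  change univ.filter (fun x : Fin n => f x = j₁) = univ.filter (fun x : Fin n => f x = j₂) at h
  obtain ⟨x, hx⟩ := hf j₁
  have h1 : x ∈ univ.filter (fun y => f y = j₁) := by simp [hx]
  rw [h] at h1
  simp only [mem_filter, mem_univ, true_and] at h1
  rw [← hx, h1]

lemma fiberPartition_parts_card (f : Fin n → Fin k) (hf : Function.Surjective f) :
    (fiberPartition f hf).parts.card = k := by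
  rw [fiberPartition_parts, Finset.card_image_of_injective _ (fiber_injective f hf),
    Finset.card_univ, Fintype.card_fin]

end FiberPartition

section PartFiber

variable {n k : ℕ} (P : Finpartition (univ : Finset (Fin n)))

/-- From a labeling equivalence to a surjection in the fiber of `P`. -/
noncomputable def labelToSurj (e : {B // B ∈ P.parts} ≃ Fin k) : Fin n → Fin k :=
  fun x => e ⟨P.part x, P.part_mem.2 (mem_univ x)⟩

lemma labelToSurj_surj (e : {B // B ∈ P.parts} ≃ Fin k) :
    Function.Surjective (labelToSurj P e) := by
  intro j
  obtain ⟨x, hx⟩ := P.nonempty_of_mem_parts (e.symm j).2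
  refine ⟨x, ?_⟩
  have hpart : P.part x = (e.symm j).1 := P.part_eq_of_mem (e.symm j).2 hx
  rw [labelToSurj]
  have : (⟨P.part x, P.part_mem.2 (mem_univ x)⟩ : {B // B ∈ P.parts}) = e.symm j :=
    Subtype.ext hpart
  rw [this, Equiv.apply_symm_apply]

lemma labelToSurj_fiber (e : {B // B ∈ P.parts} ≃ Fin k) (j : Fin k) :
    univ.filter (fun x => labelToSurj P e x = j) = (e.symm j).1 := by
  ext x
  simp only [mem_filter, mem_univ, true_and]
  unfold labelToSurj
  rw [← Equiv.eq_symm_apply]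
  constructor
  · intro h
    have : P.part x = (e.symm j).1 := congrArg Subtype.val h
    rw [← this]
    exact P.mem_part (mem_univ x)
  · intro h
    exact Subtype.ext (P.part_eq_of_mem (e.symm j).2 h)

lemma labelToSurj_fiberPartition (e : {B // B ∈ P.parts} ≃ Fin k) :
    fiberPartition (labelToSurj P e) (labelToSurj_surj P e) = P := by
  apply Finpartition.ext
  rw [fiberPartition_parts]
  ext B
  simp only [mem_image, mem_univ, true_and]
  constructor
  · rintro ⟨j, rfl⟩
    rw [labelToSurj_fiber]
    exact (e.symm j).2
  · intro hB
    refine ⟨e ⟨B, hB⟩, ?_⟩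
    rw [labelToSurj_fiber, Equiv.symm_apply_apply]

/-- For a surjection `f` in the fiber of `P`, the map sending labels to parts. -/
def surjFibMap (f : Fin n → Fin k) (hf : Function.Surjective f)
    (hφ : fiberPartition f hf = P) : Fin k → {B // B ∈ P.parts} :=
  fun j => ⟨univ.filter (fun x => f x = j), by
    rw [← hφ, fiberPartition_parts]
    exact mem_image_of_mem _ (mem_univ j)⟩

lemma surjFibMap_bijective (f : Fin n → Fin k) (hf : Function.Surjective f)
    (hφ : fiberPartition f hf = P) : Function.Bijective (surjFibMap P f hf hφ) := by
  constructor
  · intro j₁ j₂ h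
    exact fiber_injective f hf (congrArg Subtype.val h)
  · rintro ⟨B, hB⟩
    rw [← hφ, fiberPartition_parts] at hB
    obtain ⟨j, -, rfl⟩ := mem_image.1 hB
    exact ⟨j, rfl⟩

/-- The fiber of the fiber-partition map over `P` is equivalent to labelings of `P`. -/
noncomputable def partFiberEquiv :
    {f : {f : Fin n → Fin k // Function.Surjective f} // fiberPartition f.1 f.2 = P} ≃
      ({B // B ∈ P.parts} ≃ Fin k) where
  toFun F := (Equiv.ofBijective _ (surjFibMap_bijective P F.1.1 F.1.2 F.2)).symm
  invFun e := ⟨⟨labelToSurj P e, labelToSurj_surj P e⟩, labelToSurj_fiberPartition P e⟩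
  left_inv := by
    rintro ⟨⟨f, hf⟩, hφ⟩
    apply Subtype.ext
    apply Subtype.ext
    funext x
    show labelToSurj P (Equiv.ofBijective _ (surjFibMap_bijective P f hf hφ)).symm x = f x
    rw [labelToSurj, Equiv.symm_apply_eq]
    apply Subtype.ext
    show P.part x = univ.filter (fun y => f y = f x)
    refine P.part_eq_of_mem ?_ (by simp)
    have hm : univ.filter (fun y => f y = f x) ∈ (fiberPartition f hf).parts := by
      rw [fiberPartition_parts]
      exact mem_image_of_mem _ (mem_univ (f x))
    rw [hφ] at hm
    exact hm
  right_inv e := by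
    apply Equiv.ext
    intro B
    show (Equiv.ofBijective _ (surjFibMap_bijective P (labelToSurj P e)
      (labelToSurj_surj P e) (labelToSurj_fiberPartition P e))).symm B = e B
    rw [Equiv.symm_apply_eq]
    apply Subtype.ext
    show B.1 = univ.filter (fun x => labelToSurj P e x = e B)
    rw [labelToSurj_fiber, Equiv.symm_apply_apply]

end PartFiber

lemma surj_eq_stirling (n k : ℕ) : Surj n k = k.factorial * stirling n k := by
  classical
  set T := {f : Fin n → Fin k // Function.Surjective f} with hT
  have h0 : Surj n k = ∑ P ∈ (univ : Finset (Finpartition (univ : Finset (Fin n)))),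
      (univ.filter (fun f : T => fiberPartition f.1 f.2 = P)).card := by
    rw [Surj, Nat.card_eq_fintype_card]
    exact Finset.card_eq_sum_card_fiberwise (fun f _ => mem_univ _)
  rw [h0]
  have h1 : ∀ P : Finpartition (univ : Finset (Fin n)),
      (univ.filter (fun f : T => fiberPartition f.1 f.2 = P)).card =
        if P.parts.card = k then k.factorial else 0 := by
    intro P
    rw [← Fintype.card_subtype, Fintype.card_congr (partFiberEquiv P)]
    rcases eq_or_ne P.parts.card k with h | h
    · rw [if_pos h]
      have hcard : Fintype.card {B // B ∈ P.parts} = Fintype.card (Fin k) := by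
        rw [Fintype.card_coe, Fintype.card_fin, h]
      rw [Fintype.card_equiv (Fintype.equivOfCardEq hcard), Fintype.card_coe, h]
    · rw [if_neg h]
      rw [Fintype.card_eq_zero_iff]
      constructor
      intro e
      exact h (by rw [← Fintype.card_coe P.parts, Fintype.card_congr e, Fintype.card_fin])
  rw [Finset.sum_congr rfl (fun P _ => h1 P), Finset.sum_ite, Finset.sum_const_zero,
    add_zero, Finset.sum_const, smul_eq_mul, stirling, Nat.card_eq_fintype_card,
    Fintype.card_subtype, mul_comm]


lemma stirling_zero_of_pos {n : ℕ} (hn : 1 ≤ n) : stirling n 0 = 0 := by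
  rw [stirling]
  have : IsEmpty {P : Finpartition (Finset.univ : Finset (Fin n)) // P.parts.card = 0} := by
    constructor
    rintro ⟨P, hP⟩
    have hne : (Finset.univ : Finset (Fin n)) ≠ ⊥ := by
      simp only [Finset.bot_eq_empty]
      intro h
      have : (⟨0, hn⟩ : Fin n) ∈ (Finset.univ : Finset (Fin n)) := Finset.mem_univ _
      rw [h] at this
      exact absurd this (Finset.notMem_empty _)
    have := P.parts_nonempty hne
    rw [← Finset.card_pos, hP] at this
    omega
  exact Nat.card_of_isEmpty

lemma bell_succ_eq (m n : ℕ) (hn : 1 ≤ n) :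
    bell (m + 1) n = ∑ k ∈ Finset.Icc 1 n, (stirling n k : ℚ) * bell m k := by
  rw [bell, E_succ_comp, coeff_psComp, Finset.mul_sum]
  have key : ∀ k ∈ Finset.range (n + 1),
      (n.factorial : ℚ) * (coeff (R := ℚ) k (E m) * coeff (R := ℚ) n ((exp ℚ - 1) ^ k)) =
        (stirling n k : ℚ) * bell m k := by
    intro k _
    have h1 : (n.factorial : ℚ) * coeff (R := ℚ) n ((exp ℚ - 1) ^ k)
        = (k.factorial : ℚ) * (stirling n k : ℚ) := by
      rw [nfact_coeff_pow, surj_eq_stirling]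
      push_cast
      ring
    rw [bell]
    calc (n.factorial : ℚ) * (coeff (R := ℚ) k (E m) * coeff (R := ℚ) n ((exp ℚ - 1) ^ k))
        = ((n.factorial : ℚ) * coeff (R := ℚ) n ((exp ℚ - 1) ^ k)) * coeff (R := ℚ) k (E m) := by ring
      _ = (k.factorial : ℚ) * (stirling n k : ℚ) * coeff (R := ℚ) k (E m) := by rw [h1]
      _ = (stirling n k : ℚ) * ((k.factorial : ℚ) * coeff (R := ℚ) k (E m)) := by ring
  rw [Finset.sum_congr rfl key]
  have hsub : Finset.Icc 1 n ⊆ Finset.range (n + 1) := by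
    intro k hk
    simp only [Finset.mem_Icc] at hk
    simp only [Finset.mem_range]
    omega
  rw [← Finset.sum_subset hsub ?hzero]
  case hzero =>
    intro k hk hk2
    have : k = 0 := by
      simp only [Finset.mem_range] at hk
      simp only [Finset.mem_Icc] at hk2
      omega
    subst this
    rw [stirling_zero_of_pos hn]
    simp


section HyperFintype

noncomputable def hpFintype : ∀ (m : ℕ) {α : Type} [DecidableEq α] (s : Finset α),
    Fintype (HyperPartition m s)
  | 0, _, _, _ => inferInstanceAs (Fintype PUnit)
  | (m + 1), α, _, s =>
    letI : ∀ P : Finpartition s, Fintype (HyperPartition m P.parts) :=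
      fun P => hpFintype m P.parts
    inferInstanceAs (Fintype ((P : Finpartition s) × HyperPartition m P.parts))

noncomputable instance {m : ℕ} {α : Type} [DecidableEq α] {s : Finset α} :
    Fintype (HyperPartition m s) := hpFintype m s

end HyperFintype

section Transport

variable {α β : Type} [DecidableEq α] [DecidableEq β]

lemma image_injOn_subsets {f : α → β} {s : Finset α} (hf : Set.InjOn f s)
    {A B : Finset α} (hA : A ⊆ s) (hB : B ⊆ s) (h : A.image f = B.image f) : A = B := by
  ext a
  constructor
  · intro ha
    have : f a ∈ B.image f := h ▸ Finset.mem_image_of_mem f ha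
    obtain ⟨b, hb, hba⟩ := Finset.mem_image.1 this
    rwa [← hf (hB hb) (hA ha) hba]
  · intro ha
    have : f a ∈ A.image f := h ▸ Finset.mem_image_of_mem f ha
    obtain ⟨b, hb, hba⟩ := Finset.mem_image.1 this
    rwa [← hf (hA hb) (hB ha) hba]

/-- Transport of a finpartition along a map injective on `s` with image `t`. -/
def fpMap {s : Finset α} {t : Finset β} (f : α → β) (hf : Set.InjOn f s)
    (ht : s.image f = t) (P : Finpartition s) : Finpartition t where
  parts := P.parts.image (Finset.image f)
  supIndep := by
    rw [Finset.supIndep_iff_pairwiseDisjoint]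
    intro X hX Y hY hXY
    simp only [Finset.coe_image, Set.mem_image, Finset.mem_coe] at hX hY
    obtain ⟨A, hA, rfl⟩ := hX
    obtain ⟨B, hB, rfl⟩ := hY
    have hAB : A ≠ B := fun h => hXY (by rw [h])
    rw [Function.onFun, id_eq, id_eq, Finset.disjoint_left]
    intro x h1 h2
    obtain ⟨a, ha, rfl⟩ := Finset.mem_image.1 h1
    obtain ⟨b, hb, hba⟩ := Finset.mem_image.1 h2
    have : b = a := hf (P.le hB hb) (P.le hA ha) hba
    subst this
    exact hAB (P.disjoint.elim hA hB (Finset.not_disjoint_iff.2 ⟨b, ha, hb⟩))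
  sup_parts := by
    ext b
    rw [Finset.mem_sup]
    constructor
    · rintro ⟨X, hX, hb⟩
      obtain ⟨A, hA, rfl⟩ := Finset.mem_image.1 hX
      simp only [id_eq] at hb
      obtain ⟨a, ha, rfl⟩ := Finset.mem_image.1 hb
      rw [← ht]
      exact Finset.mem_image_of_mem f (P.le hA ha)
    · intro hb
      rw [← ht] at hb
      obtain ⟨a, ha, rfl⟩ := Finset.mem_image.1 hb
      obtain ⟨A, hA, haA⟩ := P.exists_mem ha
      exact ⟨A.image f, Finset.mem_image_of_mem _ hA, Finset.mem_image_of_mem f haA⟩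
  bot_notMem := by
    simp only [Finset.bot_eq_empty, Finset.mem_image, not_exists]
    intro A hA
    obtain ⟨h1, h2⟩ := hA
    rw [Finset.image_eq_empty] at h2
    subst h2
    exact P.bot_notMem h1

lemma fpMap_parts {s : Finset α} {t : Finset β} (f : α → β) (hf : Set.InjOn f s)
    (ht : s.image f = t) (P : Finpartition s) :
    (fpMap f hf ht P).parts = P.parts.image (Finset.image f) := rfl

lemma fpMap_bijective {s : Finset α} {t : Finset β} (f : α → β) (hf : Set.InjOn f s)
    (ht : s.image f = t) : Function.Bijective (fpMap f hf ht) := by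
  constructor
  · intro P₁ P₂ h
    have hparts : P₁.parts.image (Finset.image f) = P₂.parts.image (Finset.image f) :=
      congrArg Finpartition.parts h
    apply Finpartition.ext
    ext A
    constructor
    · intro hA
      have : A.image f ∈ P₂.parts.image (Finset.image f) :=
        hparts ▸ Finset.mem_image_of_mem _ hA
      obtain ⟨B, hB, hBA⟩ := Finset.mem_image.1 this
      rwa [image_injOn_subsets hf (P₂.le hB) (P₁.le hA) hBA] at hB
    · intro hA
      have : A.image f ∈ P₁.parts.image (Finset.image f) :=
        hparts ▸ Finset.mem_image_of_mem _ hA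
      obtain ⟨B, hB, hBA⟩ := Finset.mem_image.1 this
      rwa [image_injOn_subsets hf (P₁.le hB) (P₂.le hA) hBA] at hB
  · intro Q
    refine ⟨⟨Q.parts.image (fun B => s.filter (fun a => f a ∈ B)), ?_, ?_, ?_⟩, ?_⟩
    · rw [Finset.supIndep_iff_pairwiseDisjoint]
      intro X hX Y hY hXY
      simp only [Finset.coe_image, Set.mem_image, Finset.mem_coe] at hX hY
      obtain ⟨A, hA, rfl⟩ := hX
      obtain ⟨B, hB, rfl⟩ := hY
      have hAB : A ≠ B := fun h => hXY (by rw [h])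
      rw [Function.onFun, id_eq, id_eq, Finset.disjoint_left]
      intro x h1 h2
      simp only [Finset.mem_filter] at h1 h2
      exact hAB (Q.disjoint.elim hA hB (Finset.not_disjoint_iff.2 ⟨f x, h1.2, h2.2⟩))
    · ext a
      rw [Finset.mem_sup]
      constructor
      · rintro ⟨X, hX, ha⟩
        obtain ⟨B, hB, rfl⟩ := Finset.mem_image.1 hX
        simp only [id_eq, Finset.mem_filter] at ha
        exact ha.1
      · intro ha
        have hfa : f a ∈ t := ht ▸ Finset.mem_image_of_mem f ha
        obtain ⟨B, hB, hfB⟩ := Q.exists_mem hfa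
        exact ⟨s.filter (fun x => f x ∈ B), Finset.mem_image_of_mem _ hB,
          by simp [ha, hfB]⟩
    · simp only [Finset.bot_eq_empty, Finset.mem_image, not_exists]
      intro B hBh
      obtain ⟨hB, h⟩ := hBh
      obtain ⟨b, hb⟩ := Q.nonempty_of_mem_parts hB
      have hbt : b ∈ t := Q.le hB hb
      rw [← ht] at hbt
      obtain ⟨a, ha, rfl⟩ := Finset.mem_image.1 hbt
      have : a ∈ s.filter (fun x => f x ∈ B) := by simp [ha, hb]
      rw [h] at this
      exact absurd this (Finset.notMem_empty a)
    · apply Finpartition.ext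
      rw [fpMap_parts, Finset.image_image]
      have key : ∀ B ∈ Q.parts, (s.filter (fun a => f a ∈ B)).image f = B := by
        intro B hB
        ext b
        constructor
        · intro hb
          obtain ⟨a, ha, rfl⟩ := Finset.mem_image.1 hb
          exact (Finset.mem_filter.1 ha).2
        · intro hb
          have hbt : b ∈ t := Q.le hB hb
          rw [← ht] at hbt
          obtain ⟨a, ha, rfl⟩ := Finset.mem_image.1 hbt
          exact Finset.mem_image_of_mem f (by simp [ha, hb])
      calc Q.parts.image (fun B => (s.filter (fun a => f a ∈ B)).image f)
          = Q.parts.image id := Finset.image_congr (fun B hB => key B hB)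
        _ = Q.parts := Finset.image_id

/-- Transport of finpartitions as an equivalence. -/
noncomputable def fpEquiv {s : Finset α} {t : Finset β} (f : α → β) (hf : Set.InjOn f s)
    (ht : s.image f = t) : Finpartition s ≃ Finpartition t :=
  Equiv.ofBijective _ (fpMap_bijective f hf ht)

end Transport


section HpCongr

lemma injOn_image_parts {α β : Type} [DecidableEq α] [DecidableEq β]
    {s : Finset α} {f : α → β} (hf : Set.InjOn f s) (P : Finpartition s) :
    Set.InjOn (Finset.image f) ↑P.parts := by
  intro A hA B hB h
  exact image_injOn_subsets hf (P.le hA) (P.le hB) h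

/-- Transport of hyper partitions along a map injective on `s` with image `t`. -/
noncomputable def hpCongr : ∀ (m : ℕ) {α β : Type} [DecidableEq α] [DecidableEq β]
    {s : Finset α} {t : Finset β} (f : α → β), Set.InjOn f s → s.image f = t →
    (HyperPartition m s ≃ HyperPartition m t)
  | 0, _, _, _, _, _, _, _, _, _ => Equiv.refl PUnit
  | (m + 1), α, β, _, _, s, t, f, hf, ht =>
    (Equiv.sigmaCongr (fpEquiv f hf ht)
      (fun P => hpCongr m (Finset.image f) (injOn_image_parts hf P)
        (fpMap_parts f hf ht P).symm) :
      ((P : Finpartition s) × HyperPartition m P.parts) ≃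
        ((Q : Finpartition t) × HyperPartition m Q.parts))

lemma hpCongr_outerBlocks : ∀ (m : ℕ) {α β : Type} [DecidableEq α] [DecidableEq β]
    {s : Finset α} {t : Finset β} (f : α → β) (hf : Set.InjOn f s) (ht : s.image f = t)
    (p : HyperPartition m s),
    HyperPartition.outerBlocks m (hpCongr m f hf ht p) = HyperPartition.outerBlocks m p
  | 0, α, β, _, _, s, t, f, hf, ht, p => by
    show t.card = s.card
    rw [← ht, Finset.card_image_of_injOn hf]
  | 1, α, β, _, _, s, t, f, hf, ht, p => by
    obtain ⟨P, q⟩ := p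
    show (fpMap f hf ht P).parts.card = P.parts.card
    rw [fpMap_parts, Finset.card_image_of_injOn (injOn_image_parts hf P)]
  | (m + 2), α, β, _, _, s, t, f, hf, ht, p => by
    obtain ⟨P, q⟩ := p
    show HyperPartition.outerBlocks (m + 1)
        (hpCongr (m + 1) (Finset.image f) (injOn_image_parts hf P)
          (fpMap_parts f hf ht P).symm q)
      = HyperPartition.outerBlocks (m + 1) q
    exact hpCongr_outerBlocks (m + 1) _ _ _ q

end HpCongr

section Bounds

lemma outerBlocks_le : ∀ (m : ℕ) {α : Type} [DecidableEq α] {s : Finset α}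
    (p : HyperPartition m s), HyperPartition.outerBlocks m p ≤ s.card
  | 0, _, _, s, p => le_refl _
  | 1, _, _, s, p => by
    show p.1.parts.card ≤ s.card
    have h1 : p.1.parts.card = ∑ B ∈ p.1.parts, 1 := by simp
    have h2 : ∑ B ∈ p.1.parts, 1 ≤ ∑ B ∈ p.1.parts, B.card :=
      Finset.sum_le_sum fun B hB =>
        Finset.card_pos.2 (p.1.nonempty_of_mem_parts hB)
    rw [h1]
    exact h2.trans (le_of_eq p.1.sum_card_parts)
  | (m + 2), α, _, s, p => by
    show HyperPartition.outerBlocks (m + 1) p.2 ≤ s.card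
    calc HyperPartition.outerBlocks (m + 1) p.2 ≤ p.1.parts.card :=
          outerBlocks_le (m + 1) p.2
      _ ≤ s.card := outerBlocks_le 1 ⟨p.1, PUnit.unit⟩

lemma outerBlocks_pos : ∀ (m : ℕ) {α : Type} [DecidableEq α] {s : Finset α}
    (hs : s.Nonempty) (p : HyperPartition m s), 1 ≤ HyperPartition.outerBlocks m p
  | 0, _, _, s, hs, p => Finset.card_pos.2 hs
  | 1, _, _, s, hs, p => by
    show 1 ≤ p.1.parts.card
    exact Finset.card_pos.2 (p.1.parts_nonempty
      (by rw [Finset.bot_eq_empty]; exact Finset.nonempty_iff_ne_empty.1 hs))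
  | (m + 2), α, _, s, hs, p => by
    show 1 ≤ HyperPartition.outerBlocks (m + 1) p.2
    exact outerBlocks_pos (m + 1) (p.1.parts_nonempty
      (by rw [Finset.bot_eq_empty]; exact Finset.nonempty_iff_ne_empty.1 hs)) p.2

end Bounds


section HyperStirlingLemmas

lemma hyperStirling_one (n k : ℕ) : hyperStirling 1 n k = stirling n k := by
  rw [hyperStirling, stirling]
  apply Nat.card_congr
  exact { toFun := fun p => ⟨p.1.1, p.2⟩
          invFun := fun P => ⟨⟨P.1, PUnit.unit⟩, P.2⟩
          left_inv := fun p => rfl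
          right_inv := fun P => rfl }

lemma card_hp_subtype {α : Type} [DecidableEq α] (r i : ℕ) {s : Finset α}
    (hs : s.Nonempty) :
    Nat.card {p : HyperPartition r s // HyperPartition.outerBlocks r p = i} =
      hyperStirling r s.card i := by
  classical
  set e := s.equivFin with he
  set f : α → Fin s.card :=
    fun a => if h : a ∈ s then e ⟨a, h⟩ else e ⟨hs.choose, hs.choose_spec⟩ with hfdef
  have hf : Set.InjOn f s := by
    intro a ha b hb hab
    have ha' : a ∈ s := ha
    have hb' : b ∈ s := hb
    rw [hfdef] at hab
    simp only [dif_pos ha', dif_pos hb'] at hab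
    have := e.injective hab
    exact congrArg Subtype.val this
  have ht : s.image f = Finset.univ := by
    apply Finset.eq_univ_of_forall
    intro j
    refine Finset.mem_image.2 ⟨(e.symm j).1, (e.symm j).2, ?_⟩
    rw [hfdef]
    simp only [dif_pos (e.symm j).2]
    rw [show (⟨(e.symm j).1, (e.symm j).2⟩ : {x // x ∈ s}) = e.symm j from rfl,
      Equiv.apply_symm_apply]
  rw [hyperStirling]
  apply Nat.card_congr
  exact Equiv.subtypeEquiv (hpCongr r f hf ht)
    (fun p => by rw [hpCongr_outerBlocks])

lemma hyperStirling_eq_zero_of_gt {r k i : ℕ} (h : k < i) : hyperStirling r k i = 0 := by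
  rw [hyperStirling]
  have : IsEmpty {p : HyperPartition r (Finset.univ : Finset (Fin k)) //
      HyperPartition.outerBlocks r p = i} := by
    constructor
    rintro ⟨p, hp⟩
    have hle := outerBlocks_le r p
    rw [hp, Finset.card_univ, Fintype.card_fin] at hle
    omega
  exact Nat.card_of_isEmpty

/-- The sigma decomposition of constrained hyper partitions. -/
def hpSigmaEquiv (r n i : ℕ) :
    {p : HyperPartition (r + 2) (Finset.univ : Finset (Fin n)) //
        HyperPartition.outerBlocks (r + 2) p = i} ≃
      (P : Finpartition (Finset.univ : Finset (Fin n))) ×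
        {q : HyperPartition (r + 1) P.parts //
          HyperPartition.outerBlocks (r + 1) q = i} where
  toFun p := ⟨p.1.1, ⟨p.1.2, p.2⟩⟩
  invFun x := ⟨⟨x.1, x.2.1⟩, x.2.2⟩
  left_inv p := rfl
  right_inv x := rfl

lemma hyperStirling_succ (r n i : ℕ) (hr : 1 ≤ r) (hn : 1 ≤ n) :
    hyperStirling (r + 1) n i =
      ∑ k ∈ Finset.Icc 1 n, stirling n k * hyperStirling r k i := by
  classical
  obtain ⟨r, rfl⟩ : ∃ r', r = r' + 1 := ⟨r - 1, by omega⟩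
  have huniv : (Finset.univ : Finset (Fin n)).Nonempty := ⟨⟨0, hn⟩, Finset.mem_univ _⟩
  have hbounds : ∀ P : Finpartition (Finset.univ : Finset (Fin n)),
      P.parts.card ∈ Finset.Icc 1 n := by
    intro P
    have h1 : 1 ≤ HyperPartition.outerBlocks 1
        (⟨P, PUnit.unit⟩ : HyperPartition 1 (Finset.univ : Finset (Fin n))) :=
      outerBlocks_pos 1 huniv _
    have h2 := outerBlocks_le 1
      (⟨P, PUnit.unit⟩ : HyperPartition 1 (Finset.univ : Finset (Fin n)))
    rw [Finset.card_univ, Fintype.card_fin] at h2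
    exact Finset.mem_Icc.2 ⟨h1, h2⟩
  have h1 : hyperStirling (r + 2) n i =
      ∑ P ∈ (Finset.univ : Finset (Finpartition (Finset.univ : Finset (Fin n)))),
        hyperStirling (r + 1) P.parts.card i := by
    rw [hyperStirling, Nat.card_eq_fintype_card, Fintype.card_congr (hpSigmaEquiv r n i),
      Fintype.card_sigma]
    refine Finset.sum_congr rfl fun P _ => ?_
    rw [← Nat.card_eq_fintype_card]
    exact card_hp_subtype (r + 1) i (P.parts_nonempty
      (by rw [Finset.bot_eq_empty]; exact Finset.nonempty_iff_ne_empty.1 huniv))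
  rw [h1, ← Finset.sum_fiberwise_of_maps_to (g := fun P => P.parts.card)
    (t := Finset.Icc 1 n) (fun P _ => hbounds P)]
  refine Finset.sum_congr rfl fun k hk => ?_
  rw [Finset.sum_congr rfl (fun P hP => by
    rw [(Finset.mem_filter.1 hP).2] : ∀ P ∈ Finset.filter _ _, _ = hyperStirling (r+1) k i)]
  rw [Finset.sum_const, smul_eq_mul, stirling, Nat.card_eq_fintype_card, Fintype.card_subtype]

end HyperStirlingLemmas

/-- `Bₙ^(m) = Σ_{i=1}^n B_i^(m−r) · S^(r)(n,i)` for `m ≥ 1`,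
`1 ≤ r ≤ m−1`, `n ≥ 1`. -/
theorem stmt9 (m r n : ℕ) (hm : 1 ≤ m) (hr : 1 ≤ r) (hrm : r ≤ m - 1) (hn : 1 ≤ n) :
    bell m n = ∑ i ∈ Finset.Icc 1 n, bell (m - r) i * (hyperStirling r n i : ℚ) := by
  have main : ∀ r m n : ℕ, 1 ≤ r → r + 1 ≤ m → 1 ≤ n →
      bell m n = ∑ i ∈ Finset.Icc 1 n, bell (m - r) i * (hyperStirling r n i : ℚ) := by
    intro r
    induction r with
    | zero =>
      intro m n h
      exact absurd h (by omega)
    | succ r ih =>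
      intro m n _ hm hn
      obtain ⟨m', rfl⟩ : ∃ m', m = m' + 1 := ⟨m - 1, by omega⟩
      rcases Nat.eq_zero_or_pos r with rfl | hrpos
      · -- base case r + 1 = 1
        rw [bell_succ_eq m' n hn]
        refine Finset.sum_congr rfl fun i hi => ?_
        rw [hyperStirling_one, Nat.add_sub_cancel]
        ring
      · -- inductive step
        rw [bell_succ_eq m' n hn]
        have hstep : ∀ k ∈ Finset.Icc 1 n,
            (stirling n k : ℚ) * bell m' k =
              ∑ i ∈ Finset.Icc 1 n,
                (stirling n k : ℚ) * (bell (m' - r) i * (hyperStirling r k i : ℚ)) := by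
          intro k hk
          obtain ⟨hk1, hk2⟩ := Finset.mem_Icc.1 hk
          rw [ih m' k hrpos (by omega) hk1, Finset.mul_sum]
          refine Finset.sum_subset (Finset.Icc_subset_Icc_right hk2) ?_
          intro i hi hik
          have h1 := Finset.mem_Icc.1 hi
          have hki : k < i := by
            simp only [Finset.mem_Icc] at hik
            omega
          rw [hyperStirling_eq_zero_of_gt hki]
          simp
        rw [Finset.sum_congr rfl hstep, Finset.sum_comm]
        refine Finset.sum_congr rfl fun i hi => ?_
        have hcast : ((hyperStirling (r + 1) n i : ℕ) : ℚ) =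
            ∑ k ∈ Finset.Icc 1 n, (stirling n k : ℚ) * (hyperStirling r k i : ℚ) := by
          rw [hyperStirling_succ r n i hrpos hn]
          push_cast
          rfl
        have harith : m' + 1 - (r + 1) = m' - r := by omega
        rw [harith, hcast, Finset.mul_sum]
        exact Finset.sum_congr rfl fun k _ => by ring
  exact main r m n hr (by omega) hn
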